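/- For c ∈ B(T), the Blaschke factor B_c = (α* − c)(I − L_c c* α*)^{-1} √(L_c) is a unitary operator from ℓ²(T)^q to ℓ²(T); in particular B_c* B_c = I. -/

import Mathlib

open scoped InnerProductSpace ENNReal
open ContinuousLinearMap (adjoint)

noncomputable section

set_option maxHeartbeats 2000000
set_option synthInstance.maxHeartbeats 400000

namespace Multiscale

/-- A homogeneous tree of order `q` with a distinguished boundary point `∞`,
encoded by the `q` primitive shift maps (the right action `t ↦ t·αⱼ`, giving the
`q` successors of a node) together with the parent map (the first step of the
unique path from a node towards the boundary point `∞`).  The axioms say: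
the shifts are jointly injective, `t·αⱼ` has parent `t`, every node is a
successor of its parent, the parent map has no cycles (acyclicity of the tree)
and the paths from any two nodes to `∞` eventually merge (connectedness and the
choice of one common boundary point). -/
structure HomTree (q : ℕ) (T : Type) where
  shift : Fin q → T → T
  parent : T → T
  shift_inj : ∀ i j s t, shift i s = shift j t → i = j ∧ s = t
  parent_shift : ∀ j t, parent (shift j t) = t
  shift_parent : ∀ t, ∃ j, shift j (parent t) = t
  acyclic : ∀ t n, parent^[n] t = t → n = 0
  connected : ∀ s t, ∃ m n, parent^[m] s = parent^[n] t

variable {q : ℕ} {T : Type} [DecidableEq T]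

/-- The partial order `s ⪯ t` induced by the boundary point:
`dist(s, s ∧ t) ≤ dist(t, s ∧ t)`. -/
def HomTree.ple (S : HomTree q T) (s t : T) : Prop :=
  ∃ m n, m ≤ n ∧ S.parent^[m] s = S.parent^[n] t

/-- The horocycle equivalence `s ≍ t` : `dist(s, s ∧ t) = dist(t, s ∧ t)`. -/
def HomTree.horo (S : HomTree q T) (s t : T) : Prop :=
  ∃ n, S.parent^[n] s = S.parent^[n] t

/-- The right action `t ↦ t·w` of a word `w ∈ F_q` on the tree. -/
def HomTree.act (S : HomTree q T) : List (Fin q) → T → T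
  | [], t => t
  | i :: w, t => S.act w (S.shift i t)

/-- `ℓ²(T)`. -/
abbrev L2 (T : Type) : Type := lp (fun _ : T => ℂ) 2

/-- The operator on `ℓ²` associated with a word `w ∈ F_q`, built from the
operators of the primitive shifts: `(w f)(t) = f(t·w)`. -/
def wordOp {q : ℕ} {H : Type} [NormedAddCommGroup H] [NormedSpace ℂ H]
    (A : Fin q → (H →L[ℂ] H)) : List (Fin q) → (H →L[ℂ] H)
  | [] => 1
  | i :: w => A i ∘L wordOp A w

/-- A bounded operator on `ℓ²(T)` is causal if whenever `f` vanishes on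
`{t : t ⪯ s}` so does `Xf`. -/
def Causal (S : HomTree q T) (X : L2 T →L[ℂ] L2 T) : Prop :=
  ∀ s : T, ∀ f : L2 T, (∀ t, S.ple t s → f t = 0) → ∀ t, S.ple t s → X f t = 0

/-- A constant: both `X` and `X*` are causal. -/
def IsConst (S : HomTree q T) (X : L2 T →L[ℂ] L2 T) : Prop :=
  Causal S X ∧ Causal S (adjoint X)

/-- Diagonal with respect to the standard basis `χ_t`. -/
def IsDiagonal (X : L2 T →L[ℂ] L2 T) : Prop :=
  ∀ t : T, ∃ a : ℂ, X (lp.single 2 t 1) = a • lp.single 2 t 1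

/-- A pair of words of `F_q` is irreducible if it is not of the form
`(αᵢ v₁, αᵢ v₂)`. -/
def Irred {q : ℕ} (w₁ w₂ : List (Fin q)) : Prop :=
  ¬ ∃ (i : Fin q) (v₁ v₂ : List (Fin q)), w₁ = i :: v₁ ∧ w₂ = i :: v₂

/-- Membership in the Hilbert--Schmidt class: `trace (X*X) = Σ_t ‖X χ_t‖² < ∞`. -/
def HSSummable (X : L2 T →L[ℂ] L2 T) : Prop :=
  Summable fun t : T => ‖X (lp.single 2 t 1)‖ ^ 2

/-- The Hilbert--Schmidt norm `‖X‖₂ = (trace (X*X))^{1/2}`. -/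
def hsNorm (X : L2 T →L[ℂ] L2 T) : ℝ :=
  Real.sqrt (∑' t : T, ‖X (lp.single 2 t 1)‖ ^ 2)

/-- The Hilbert--Schmidt inner product `⟨X, Y⟩₂ = trace (Y* X)`
(linear in `X`, conjugate-linear in `Y`). -/
def hsInner (X Y : L2 T →L[ℂ] L2 T) : ℂ :=
  ∑' t : T, ⟪Y (lp.single 2 t 1), X (lp.single 2 t 1)⟫_ℂ


/-- `ℓ²(T)^q` with the Hilbert space structure. -/
abbrev L2q (q : ℕ) (T : Type) : Type := PiLp 2 (fun _ : Fin q => L2 T)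

instance {q : ℕ} {T : Type} : CompleteSpace (L2q q T) :=
  inferInstance

/-- For `c ∈ B(T)`, the Blaschke factor
`B_c = (α* − c)(I − L_c c* α*)⁻¹ √(L_c)` is a unitary operator from `ℓ²(T)^q`
to `ℓ²(T)`; in particular `B_c* B_c = I`.  Here `Al` is the unitary column of
the primitive shifts, `cr` the row operator of `c`, `R` = `R_c`, `L` = `L_c`,
`sqL = √(L_c)`, and `J = (I − L_c c* α*)⁻¹`. -/
theorem blaschke_factor_unitary {q : ℕ} (hq : 1 ≤ q) {T : Type} [DecidableEq T]
    (S : HomTree q T) (A : Fin q → (L2 T →L[ℂ] L2 T))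
    (hA : ∀ (j : Fin q) (f : L2 T) (t : T), A j f t = f (S.shift j t))
    (Al : L2 T →L[ℂ] L2q q T)
    (hAl : ∀ (f : L2 T) (j : Fin q), Al f j = A j f)
    (hAlU₁ : Al ∘L adjoint Al = 1) (hAlU₂ : adjoint Al ∘L Al = 1)
    (c : Fin q → (L2 T →L[ℂ] L2 T)) (hc : ∀ j, IsConst S (c j))
    (cr : L2q q T →L[ℂ] L2 T)
    (hcr : ∀ g : L2q q T, cr g = ∑ j, c j (g j))
    (hrad : spectralRadius ℂ (cr ∘L Al) < 1)
    (R Rinv : L2 T →L[ℂ] L2 T)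
    (hR : HasSum (fun n : ℕ =>
      ((cr ∘L Al) ^ n) ∘L ((adjoint (cr ∘L Al)) ^ n)) R)
    (hRid : R = 1 + cr ∘L (Al ∘L R ∘L adjoint Al) ∘L adjoint cr)
    (hRgeI : (R - 1).IsPositive)
    (hRinv₁ : R ∘L Rinv = 1) (hRinv₂ : Rinv ∘L R = 1)
    (L Linv : L2q q T →L[ℂ] L2q q T)
    (hL : L = Al ∘L (R - R ∘L adjoint Al ∘L adjoint cr ∘L Rinv ∘L cr ∘L Al ∘L R)
      ∘L adjoint Al)
    (hLpos : L.IsPositive)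
    (hLinv₁ : L ∘L Linv = 1) (hLinv₂ : Linv ∘L L = 1)
    (hLinv : Linv = adjoint cr ∘L cr + Al ∘L Rinv ∘L adjoint Al)
    (hcL : cr ∘L L = Rinv ∘L cr ∘L Al ∘L R ∘L adjoint Al)
    (hkey : (1 - Al ∘L cr ∘L L) ∘L Linv ∘L (1 - L ∘L adjoint cr ∘L adjoint Al)
      = (Al - adjoint cr) ∘L (adjoint Al - cr))
    (sqL : L2q q T →L[ℂ] L2q q T)
    (hsqL : sqL.IsPositive ∧ sqL ∘L sqL = L)
    (J : L2q q T →L[ℂ] L2q q T)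
    (hJ₁ : (1 - L ∘L adjoint cr ∘L adjoint Al) ∘L J = 1)
    (hJ₂ : J ∘L (1 - L ∘L adjoint cr ∘L adjoint Al) = 1) :
    adjoint ((adjoint Al - cr) ∘L J ∘L sqL) ∘L ((adjoint Al - cr) ∘L J ∘L sqL)
        = 1 ∧
      ((adjoint Al - cr) ∘L J ∘L sqL) ∘L
        adjoint ((adjoint Al - cr) ∘L J ∘L sqL) = 1 := by
  classical
  have hLsa : adjoint L = L := hLpos.isSelfAdjoint.adjoint_eq
  have hsqLsa : adjoint sqL = sqL := hsqL.1.isSelfAdjoint.adjoint_eq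
  have hadj1 : adjoint (1 : L2q q T →L[ℂ] L2q q T) = 1 := by
    rw [← ContinuousLinearMap.star_eq_adjoint]; exact star_one _
  -- pointwise versions of hypotheses
  have hsq' : ∀ g : L2q q T, sqL (sqL g) = L g := fun g => by
    simpa only [ContinuousLinearMap.comp_apply] using DFunLike.congr_fun hsqL.2 g
  have hL₁' : ∀ g : L2q q T, L (Linv g) = g := fun g => by
    simpa only [ContinuousLinearMap.comp_apply, ContinuousLinearMap.one_apply] using DFunLike.congr_fun hLinv₁ g
  have hL₂' : ∀ g : L2q q T, Linv (L g) = g := fun g => by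
    simpa only [ContinuousLinearMap.comp_apply, ContinuousLinearMap.one_apply] using DFunLike.congr_fun hLinv₂ g
  have hkey' : ∀ g : L2q q T,
      (1 - Al ∘L cr ∘L L) (Linv ((1 - L ∘L adjoint cr ∘L adjoint Al) g))
        = (Al - adjoint cr) ((adjoint Al - cr) g) := fun g => by
    simpa only [ContinuousLinearMap.comp_apply] using DFunLike.congr_fun hkey g
  have hJ₁' : ∀ g : L2q q T, (1 - L ∘L adjoint cr ∘L adjoint Al) (J g) = g := fun g => by
    simpa only [ContinuousLinearMap.comp_apply, ContinuousLinearMap.one_apply] using DFunLike.congr_fun hJ₁ g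
  -- adjoints
  have hMadj : adjoint (adjoint Al - cr) = Al - adjoint cr := by
    simp [map_sub, ContinuousLinearMap.adjoint_adjoint]
  have hKadj : adjoint (1 - L ∘L adjoint cr ∘L adjoint Al) = 1 - Al ∘L cr ∘L L := by
    rw [map_sub, hadj1, ContinuousLinearMap.adjoint_comp,
      ContinuousLinearMap.adjoint_comp, ContinuousLinearMap.adjoint_adjoint, ContinuousLinearMap.adjoint_adjoint, hLsa]
    rfl
  have hJaK : adjoint J ∘L (1 - Al ∘L cr ∘L L) = 1 := by
    rw [← hKadj, ← ContinuousLinearMap.adjoint_comp, hJ₁, hadj1]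
  have hJaK' : ∀ g : L2q q T, adjoint J ((1 - Al ∘L cr ∘L L) g) = g := fun g => by
    simpa only [ContinuousLinearMap.comp_apply, ContinuousLinearMap.one_apply] using DFunLike.congr_fun hJaK g
  have hKJa : (1 - Al ∘L cr ∘L L) ∘L adjoint J = 1 := by
    rw [← hKadj, ← ContinuousLinearMap.adjoint_comp, hJ₂, hadj1]
  have hKJa' : ∀ g : L2q q T, (1 - Al ∘L cr ∘L L) (adjoint J g) = g := fun g => by
    simpa only [ContinuousLinearMap.comp_apply, ContinuousLinearMap.one_apply] using DFunLike.congr_fun hKJa g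
  -- adjoint of B applied pointwise
  have hBadj : ∀ f : L2 T,
      adjoint ((adjoint Al - cr) ∘L J ∘L sqL) f
        = sqL (adjoint J ((Al - adjoint cr) f)) := fun f => by
    rw [ContinuousLinearMap.adjoint_comp, ContinuousLinearMap.adjoint_comp,
      hMadj, hsqLsa]
    rfl
  -- sqL commutes with L and Linv
  have hcomm : ∀ g : L2q q T, sqL (L g) = L (sqL g) := fun g => by
    rw [← hsq' g, ← hsq' (sqL g)]
  have hcommInv : ∀ g : L2q q T, Linv (sqL g) = sqL (Linv g) := fun g => by
    conv_lhs => rw [← hL₁' g]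
    rw [hcomm (Linv g), hL₂']
  have hsli : ∀ g : L2q q T, sqL (Linv (sqL g)) = g := fun g => by
    rw [hcommInv, hsq', hL₁']
  -- injectivity of N = Al - adjoint cr
  have hu0 : IsUnit ((1 : L2 T →L[ℂ] L2 T) - cr ∘L Al) := by
    by_contra hcon
    have hmem : (1 : ℂ) ∈ spectrum ℂ (cr ∘L Al) := by
      rw [spectrum.mem_iff]; simpa using hcon
    have hle : (1 : ℝ≥0∞) ≤ spectralRadius ℂ (cr ∘L Al) := by
      have h' := le_iSup₂ (f := fun (k : ℂ) (_ : k ∈ spectrum ℂ (cr ∘L Al)) =>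
        (‖k‖₊ : ℝ≥0∞)) 1 hmem
      simpa [spectralRadius] using h'
    exact absurd hle hrad.not_ge
  have hu : IsUnit ((1 : L2 T →L[ℂ] L2 T) - adjoint (cr ∘L Al)) := by
    have := hu0.star
    rwa [star_sub, star_one, ContinuousLinearMap.star_eq_adjoint] at this
  have hNinj : ∀ h : L2 T, (Al - adjoint cr) h = 0 → h = 0 := by
    intro h hh
    have h1 : ((1 : L2 T →L[ℂ] L2 T) - adjoint (cr ∘L Al)) h = 0 := by
      have h2 := congrArg (adjoint Al) hh
      have h3 : ∀ f : L2 T, adjoint Al (Al f) = f := fun f => by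
        simpa only [ContinuousLinearMap.comp_apply, ContinuousLinearMap.one_apply] using DFunLike.congr_fun hAlU₂ f
      simpa [ContinuousLinearMap.sub_apply, map_sub, h3,
        ContinuousLinearMap.adjoint_comp] using h2
    obtain ⟨u, hu'⟩ := hu
    calc h = ((↑u⁻¹ * ↑u : L2 T →L[ℂ] L2 T)) h := by
          rw [u.inv_mul]; rfl
      _ = (↑u⁻¹ : L2 T →L[ℂ] L2 T) ((↑u : L2 T →L[ℂ] L2 T) h) := rfl
      _ = (↑u⁻¹ : L2 T →L[ℂ] L2 T) (((1 : L2 T →L[ℂ] L2 T) - adjoint (cr ∘L Al)) h) := by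
          rw [hu']
      _ = 0 := by rw [h1, map_zero]
  constructor
  · refine ContinuousLinearMap.ext fun g => ?_
    rw [ContinuousLinearMap.comp_apply, ContinuousLinearMap.one_apply]
    have hBg : ((adjoint Al - cr) ∘L J ∘L sqL) g = (adjoint Al - cr) (J (sqL g)) := rfl
    rw [hBg, hBadj, ← hkey' (J (sqL g)), hJ₁', hJaK', hsli]
  · refine ContinuousLinearMap.ext fun f => ?_
    rw [ContinuousLinearMap.comp_apply, ContinuousLinearMap.one_apply]
    have hBaf : ((adjoint Al - cr) ∘L J ∘L sqL)
        (adjoint ((adjoint Al - cr) ∘L J ∘L sqL) f)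
        = (adjoint Al - cr) (J (sqL (sqL (adjoint J ((Al - adjoint cr) f))))) := by
      rw [hBadj]; rfl
    rw [hBaf, hsq']
    have hNP : (Al - adjoint cr)
        ((adjoint Al - cr) (J (L (adjoint J ((Al - adjoint cr) f)))))
        = (Al - adjoint cr) f := by
      rw [← hkey', hJ₁', hL₂', hKJa']
    have := hNinj ((adjoint Al - cr) (J (L (adjoint J ((Al - adjoint cr) f)))) - f)
      (by rw [map_sub, hNP, sub_self])
    exact sub_eq_zero.mp this
end Multiscale
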